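/- Under hypotheses (L1)–(L3) — each S_λ a semigroup on X with global attractor 𝒜_λ, all attractors contained in a fixed bounded set D, and for each t > 0 the map λ ↦ S_λ(t)x continuous uniformly for x in bounded subsets of X, with Λ a complete metric space — the map λ ↦ 𝒜_λ, from Λ into the space of compact subsets of X with the Hausdorff metric, is continuous at every point of a residual subset of Λ. In particular, the set of continuity points is dense in Λ. -/

import Mathlib

open Filter Topology EMetric

/-- The Hausdorff semidistance `ρ(A,B) = sup_{a ∈ A} inf_{b ∈ B} d(a,b)`. -/
noncomputable def rho {X : Type*} [MetricSpace X] (A B : Set X) : ENNReal :=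
  ⨆ a ∈ A, infEdist a B

/-- A semigroup (semiflow) on a metric space `X`. -/
structure Semiflow (X : Type*) [MetricSpace X] where
  S : ℝ → X → X
  map_zero : ∀ x, S 0 x = x
  map_add : ∀ t s : ℝ, 0 ≤ t → 0 ≤ s → ∀ x, S (t + s) x = S t (S s x)
  cont : Continuous fun p : ℝ × X => S p.1 p.2

/-- `A` is the global attractor of the semigroup `σ`: a compact invariant set
attracting every bounded set in the Hausdorff semidistance. -/
def IsGlobalAttractor {X : Type*} [MetricSpace X] (σ : Semiflow X) (A : Set X) : Prop :=
  IsCompact A ∧ (∀ t : ℝ, 0 ≤ t → σ.S t '' A = A) ∧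
    ∀ B : Set X, Bornology.IsBounded B →
      Tendsto (fun t : ℝ => rho (σ.S t '' B) A) atTop (𝓝 0)

/-- Baire-one theorem, abstract form: a pointwise limit (in an abstract
`ℝ≥0∞`-valued distance satisfying symmetry and the triangle inequality) of
"continuous" maps from a complete metric space is continuous on a residual set. -/
theorem baire_one_residual {Λ α : Type*} [MetricSpace Λ] [CompleteSpace Λ]
    (d : α → α → ENNReal) (dcomm : ∀ a b, d a b = d b a)
    (dtri : ∀ a b c, d a c ≤ d a b + d b c)
    (F : ℕ → Λ → α) (G : Λ → α)
    (hcont : ∀ n (l₀ : Λ) (ε : ENNReal), 0 < ε →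
      ∀ᶠ l in 𝓝 l₀, d (F n l) (F n l₀) ≤ ε)
    (hconv : ∀ l, Tendsto (fun n => d (F n l) (G l)) atTop (𝓝 0)) :
    {l₀ : Λ | Tendsto (fun l => d (G l) (G l₀)) (𝓝 l₀) (𝓝 0)} ∈ residual Λ := by
  classical
  set E : ENNReal → ℕ → Set Λ :=
    fun ε n => {l | ∀ m, n ≤ m → d (F m l) (F n l) ≤ ε} with hE_def
  -- each E ε n is closed
  have hclosed : ∀ ε n, IsClosed (E ε n) := by
    intro ε n
    refine isClosed_of_closure_subset ?_
    intro l₀ hl₀ m hm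
    refine ENNReal.le_of_forall_pos_le_add fun η hη hεtop => ?_
    have h2 : (0 : ENNReal) < (η : ENNReal) / 2 :=
      ENNReal.div_pos (by exact_mod_cast hη.ne') (by norm_num)
    have hV : ({l | d (F m l) (F m l₀) ≤ (η : ENNReal) / 2} ∩
        {l | d (F n l) (F n l₀) ≤ (η : ENNReal) / 2}) ∈ 𝓝 l₀ :=
      Filter.inter_mem (hcont m l₀ _ h2) (hcont n l₀ _ h2)
    rcases mem_closure_iff_nhds.1 hl₀ _ hV with ⟨l, ⟨h1, h2'⟩, hlE⟩
    calc d (F m l₀) (F n l₀)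
        ≤ d (F m l₀) (F m l) + d (F m l) (F n l) + d (F n l) (F n l₀) :=
          le_trans (dtri _ (F n l) _) (add_le_add (dtri _ (F m l) _) le_rfl)
      _ ≤ (η : ENNReal) / 2 + ε + (η : ENNReal) / 2 :=
          add_le_add (add_le_add (by rw [dcomm]; exact h1) (hlE m hm)) h2'
      _ = ε + ((η : ENNReal) / 2 + (η : ENNReal) / 2) := by ring
      _ = ε + η := by rw [ENNReal.add_halves]
  -- the sets E ε n cover Λ
  have hunion : ∀ ε : ENNReal, 0 < ε → (⋃ n, E ε n) = Set.univ := by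
    intro ε hε
    ext l
    simp only [Set.mem_iUnion, Set.mem_univ, iff_true]
    have h2 : (0 : ENNReal) < ε / 2 := ENNReal.div_pos hε.ne' (by norm_num)
    obtain ⟨n, hn⟩ := eventually_atTop.1
      ((ENNReal.tendsto_nhds_zero.1 (hconv l)) (ε / 2) h2)
    refine ⟨n, fun m hm => ?_⟩
    calc d (F m l) (F n l) ≤ d (F m l) (G l) + d (G l) (F n l) := dtri _ _ _
      _ ≤ ε / 2 + ε / 2 := add_le_add (hn m hm) (by rw [dcomm]; exact hn n le_rfl)
      _ = ε := ENNReal.add_halves ε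
  -- key estimate on E ε n
  have hGF : ∀ (ε : ENNReal) (n : ℕ) (l : Λ), ε ≠ ⊤ → l ∈ E ε n →
      d (G l) (F n l) ≤ ε := by
    intro ε n l hεtop hl
    refine ENNReal.le_of_forall_pos_le_add fun η hη _ => ?_
    obtain ⟨m, hmn, hm⟩ := ((eventually_ge_atTop n).and
      ((ENNReal.tendsto_nhds_zero.1 (hconv l)) η (by exact_mod_cast hη))).exists
    calc d (G l) (F n l) ≤ d (G l) (F m l) + d (F m l) (F n l) := dtri _ _ _
      _ ≤ (η : ENNReal) + ε := add_le_add (by rw [dcomm]; exact hm) (hl m hmn)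
      _ = ε + η := add_comm _ _
  -- the residual set
  set εk : ℕ → ENNReal := fun k => ((k : ENNReal) + 1)⁻¹ with hεk_def
  have hεkpos : ∀ k, 0 < εk k := fun k => ENNReal.inv_pos.2 (by
    exact_mod_cast ENNReal.natCast_ne_top (k + 1))
  have hεktop : ∀ k, εk k ≠ ⊤ := fun k => ENNReal.inv_ne_top.2 (by
    simp)
  have hR : (⋂ k : ℕ, ⋃ n, interior (E (εk k) n)) ∈ residual Λ :=
    countable_iInter_mem.2 fun k =>
      residual_of_dense_open (isOpen_iUnion fun n => isOpen_interior)
        (dense_iUnion_interior_of_closed (fun n => hclosed _ n)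
          (hunion _ (hεkpos k)))
  refine mem_of_superset hR ?_
  intro l₀ hl₀
  simp only [Set.mem_iInter, Set.mem_iUnion] at hl₀
  rw [Set.mem_setOf_eq, ENNReal.tendsto_nhds_zero]
  intro ε' hε'
  have h3 : ε' / 3 ≠ 0 := (ENNReal.div_pos hε'.ne' (by norm_num)).ne'
  obtain ⟨j, hj⟩ := ENNReal.exists_inv_nat_lt h3
  have hεk_le : εk j ≤ ε' / 3 :=
    le_of_lt (lt_of_le_of_lt (ENNReal.inv_le_inv.2 (self_le_add_right _ _)) hj)
  obtain ⟨n, hn⟩ := hl₀ j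
  filter_upwards [isOpen_interior.mem_nhds hn, hcont n l₀ (εk j) (hεkpos j)]
    with l hlE hld
  have hlE' : l ∈ E (εk j) n := interior_subset hlE
  have hl₀E : l₀ ∈ E (εk j) n := interior_subset hn
  calc d (G l) (G l₀)
      ≤ d (G l) (F n l) + d (F n l) (F n l₀) + d (F n l₀) (G l₀) :=
        le_trans (dtri _ (F n l₀) _) (add_le_add (dtri _ (F n l) _) le_rfl)
    _ ≤ ε' / 3 + ε' / 3 + ε' / 3 := by
        refine add_le_add (add_le_add ?_ (hld.trans hεk_le)) ?_
        · exact (hGF _ n l (hεktop j) hlE').trans hεk_le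
        · rw [dcomm]; exact (hGF _ n l₀ (hεktop j) hl₀E).trans hεk_le
    _ = 3 * (ε' / 3) := by ring
    _ = ε' := ENNReal.mul_div_cancel' (by norm_num) (by norm_num)

theorem residual_continuity_of_attractors {Λ X : Type*} [MetricSpace Λ]
    [CompleteSpace Λ] [MetricSpace X] (S : Λ → Semiflow X) (𝒜 : Λ → Set X)
    (D : Set X)
    (hL1 : ∀ l : Λ, IsGlobalAttractor (S l) (𝒜 l))
    (hL2 : Bornology.IsBounded D ∧ ∀ l : Λ, 𝒜 l ⊆ D)
    (hL3 : ∀ t : ℝ, 0 < t → ∀ B : Set X, Bornology.IsBounded B → ∀ l₀ : Λ,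
      ∀ ε : ℝ, 0 < ε → ∃ δ : ℝ, 0 < δ ∧ ∀ l : Λ, dist l l₀ < δ →
        ∀ x ∈ B, dist ((S l).S t x) ((S l₀).S t x) < ε) :
    {l₀ : Λ | Tendsto (fun l => hausdorffEdist (𝒜 l) (𝒜 l₀)) (𝓝 l₀) (𝓝 0)}
      ∈ residual Λ ∧
    Dense {l₀ : Λ | Tendsto (fun l => hausdorffEdist (𝒜 l) (𝒜 l₀)) (𝓝 l₀) (𝓝 0)} := by
  obtain ⟨hDb, hAD⟩ := hL2
  set F : ℕ → Λ → Set X := fun n l => (S l).S ((n : ℝ) + 1) '' D with hF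
  have hcont : ∀ n (l₀ : Λ) (ε : ENNReal), 0 < ε →
      ∀ᶠ l in 𝓝 l₀, hausdorffEdist (F n l) (F n l₀) ≤ ε := by
    intro n l₀ ε hε
    obtain ⟨r, -, hr0, hrε⟩ := ENNReal.lt_iff_exists_real_btwn.1 hε
    have hrpos : 0 < r := ENNReal.ofReal_pos.1 hr0
    obtain ⟨δ, hδ, hδ'⟩ := hL3 ((n : ℝ) + 1) (by positivity) D hDb l₀ r hrpos
    filter_upwards [Metric.ball_mem_nhds l₀ hδ] with l hl
    have hd := hδ' l (by rwa [Metric.mem_ball] at hl)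
    refine le_trans (hausdorffEdist_le_of_mem_edist ?_ ?_) hrε.le
    · rintro x ⟨y, hy, rfl⟩
      exact ⟨(S l₀).S ((n : ℝ) + 1) y, Set.mem_image_of_mem _ hy, by
        rw [edist_dist]; exact ENNReal.ofReal_le_ofReal (hd y hy).le⟩
    · rintro x ⟨y, hy, rfl⟩
      exact ⟨(S l).S ((n : ℝ) + 1) y, Set.mem_image_of_mem _ hy, by
        rw [edist_dist, dist_comm]; exact ENNReal.ofReal_le_ofReal (hd y hy).le⟩
  have hconv : ∀ l, Tendsto (fun n => hausdorffEdist (F n l) (𝒜 l)) atTop (𝓝 0) := by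
    intro l
    obtain ⟨hcomp, hinv, hattr⟩ := hL1 l
    have h0 : ∀ n : ℕ, hausdorffEdist (F n l) (𝒜 l) ≤ rho (F n l) (𝒜 l) := by
      intro n
      have hsub : 𝒜 l ⊆ F n l := by
        conv_lhs => rw [← hinv ((n : ℝ) + 1) (by positivity)]
        exact fun x ⟨y, hy, h⟩ => ⟨y, hAD l hy, h⟩
      have hz : (⨆ y ∈ 𝒜 l, infEdist y (F n l)) = 0 := by
        refine le_antisymm (iSup₂_le fun a ha => ?_) zero_le
        exact (infEdist_zero_of_mem (hsub ha)).le
      unfold EMetric.hausdorffEdist EMetric.infEdist at *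
      rw [hausdorffEdist_def, hz, rho]
      simp [EMetric.infEdist]
    have hg : Tendsto (fun n : ℕ => rho ((S l).S ((n : ℝ) + 1) '' D) (𝒜 l))
        atTop (𝓝 0) :=
      (hattr D hDb).comp
        (tendsto_atTop_add_const_right atTop 1 tendsto_natCast_atTop_atTop)
    exact tendsto_of_tendsto_of_tendsto_of_le_of_le tendsto_const_nhds hg
      (fun n => zero_le) h0
  have key := baire_one_residual (fun A B : Set X => hausdorffEdist A B)
    (fun A B => hausdorffEdist_comm) (fun A B C => hausdorffEdist_triangle)
    F 𝒜 hcont hconv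
  exact ⟨key, dense_of_mem_residual key⟩
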